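/- Let Φ(t,s) be a nondegenerate homogeneous cubic (i.e., the matrix [[3a,2b,c],[b,2c,3d]] has rank 2), and define n₁(t,s) = (1, 0, Φ_tt, Φ_st, Φ_t) and n₂(t,s) = (0, 1, Φ_ts, Φ_ss, Φ_s) as vectors in ℝ⁵. If u ∈ ℝ⁵ satisfies u·n₁(t,s) = 0 and u·n₂(t,s) = 0 for all (t,s) ∈ ℝ², then u = 0. -/
import Mathlib
open Matrix

lemma aux_inj (M : Matrix (Fin 2) (Fin 3) ℝ) (h : M.rank = 2) :
    Function.Injective M.vecMulLinear := by
  have ht : Mᵀ.rank = 2 := by rw [Matrix.rank_transpose]; exact h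
  have hrn := (Mᵀ.mulVecLin).finrank_range_add_finrank_ker
  rw [Matrix.rank] at ht
  rw [ht] at hrn
  simp [Module.finrank_pi] at hrn
  exact LinearMap.ker_eq_bot.mp hrn

/-- if u ∈ ℝ⁵ is orthogonal to both tangent vectors
n₁(t,s) = (1,0,Φ_tt,Φ_st,Φ_t) and n₂(t,s) = (0,1,Φ_ts,Φ_ss,Φ_s) for all (t,s),
then u = 0. -/
theorem stmt4 (a b c d : ℝ)
    (hrank : (Matrix.rank !![3 * a, 2 * b, c; b, 2 * c, 3 * d]) = 2)
    (u : Fin 5 → ℝ)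
    (h1 : ∀ t s : ℝ,
      u 0 * 1 + u 1 * 0 + u 2 * (6 * a * t + 2 * b * s)
        + u 3 * (2 * b * t + 2 * c * s)
        + u 4 * (3 * a * t ^ 2 + 2 * b * t * s + c * s ^ 2) = 0)
    (h2 : ∀ t s : ℝ,
      u 0 * 0 + u 1 * 1 + u 2 * (2 * b * t + 2 * c * s)
        + u 3 * (2 * c * t + 6 * d * s)
        + u 4 * (b * t ^ 2 + 2 * c * t * s + 3 * d * s ^ 2) = 0) :
    u = 0 := by
  have e1 := h1 0 0
  have e2 := h1 1 0
  have e3 := h1 (-1) 0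
  have e4 := h1 0 1
  have e5 := h1 0 (-1)
  have e6 := h1 1 1
  have f1 := h2 0 0
  have f4 := h2 0 1
  have f5 := h2 0 (-1)
  have hu0 : u 0 = 0 := by linear_combination e1
  have hu1 : u 1 = 0 := by linear_combination f1
  have ha4 : a * u 4 = 0 := by linear_combination (e2 + e3 - 2*e1)/6
  have hb4 : b * u 4 = 0 := by linear_combination (e6 - e2 - e4 + e1)/2
  have hc4 : c * u 4 = 0 := by linear_combination (e4 + e5 - 2*e1)/2
  have hd4 : d * u 4 = 0 := by linear_combination (f4 + f5 - 2*f1)/6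
  have L1 : 3*a*(u 2) + b*(u 3) = 0 := by linear_combination (e2 - e3)/4
  have L2 : 2*b*(u 2) + 2*c*(u 3) = 0 := by linear_combination (e4 - e5)/2
  have L3 : c*(u 2) + 3*d*(u 3) = 0 := by linear_combination (f4 - f5)/4
  have hu4 : u 4 = 0 := by
    by_contra h4
    have ha : a = 0 := (mul_eq_zero.mp ha4).resolve_right h4
    have hb : b = 0 := (mul_eq_zero.mp hb4).resolve_right h4
    have hc : c = 0 := (mul_eq_zero.mp hc4).resolve_right h4
    have hd : d = 0 := (mul_eq_zero.mp hd4).resolve_right h4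
    have hM : (!![3 * a, 2 * b, c; b, 2 * c, 3 * d] : Matrix (Fin 2) (Fin 3) ℝ) = 0 := by
      subst ha hb hc hd
      ext i j
      fin_cases i <;> fin_cases j <;> simp
    rw [hM] at hrank
    simp [Matrix.rank_zero] at hrank
  have hv : (!![3 * a, 2 * b, c; b, 2 * c, 3 * d]).vecMulLinear ![u 2, u 3]
      = (!![3 * a, 2 * b, c; b, 2 * c, 3 * d]).vecMulLinear 0 := by
    rw [map_zero]
    funext j
    fin_cases j <;>
      simp [Matrix.vecMulLinear_apply, Matrix.vecMul, dotProduct,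
        Fin.sum_univ_two] <;> linarith
  have hv0 : (![u 2, u 3] : Fin 2 → ℝ) = 0 := aux_inj _ hrank hv
  have hu2 : u 2 = 0 := congrFun hv0 0
  have hu3 : u 3 = 0 := congrFun hv0 1
  funext i
  fin_cases i <;> simpa
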